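/- For p ∈ (0,1), the image of the unit disk under k_p(z) = pz/((p−z)(1−pz)) is the complement in the extended complex plane of the real segment [−p/(1−p)², −p/(1+p)²], and the Euclidean distance from k_p(0) = 0 to the boundary of k_p(D) equals p/(1+p)². -/

import Mathlib

open Metric Set Complex

/-- If `z` is on the unit circle and satisfies the quadratic associated to `k_p(z) = w`,
then `w` lies on the omitted segment. -/
private lemma kp_circle (p : ℝ) (hp0 : 0 < p) (hp1 : p < 1) (w z : ℂ)
    (hz : ‖z‖ = 1)
    (hq : w * p * z ^ 2 - (w * (1 + (p : ℂ) ^ 2) + p) * z + w * p = 0) :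
    ∃ t : ℝ, t ∈ Icc (-(p / (1 - p) ^ 2)) (-(p / (1 + p) ^ 2)) ∧ (t : ℂ) = w := by
  have hz0 : z ≠ 0 := by
    intro h; rw [h] at hz; simp at hz
  have hconj : z * (starRingEnd ℂ) z = 1 := by
    rw [Complex.mul_conj]
    norm_cast
    rw [← Complex.sq_norm, hz]; norm_num
  have hcle : |z.re| ≤ 1 := by simpa [hz] using Complex.abs_re_le_norm z
  have hadd : z + (starRingEnd ℂ) z = 2 * (z.re : ℂ) := by
    rw [Complex.add_conj]; push_cast; ring
  set c : ℝ := z.re with hc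
  have hrneg : 2 * p * c - (1 + p ^ 2) < 0 := by nlinarith [abs_le.mp hcle]
  have hrub : 2 * p * c - (1 + p ^ 2) ≤ -(1 - p) ^ 2 := by nlinarith [(abs_le.mp hcle).2]
  have hrlb : -(1 + p) ^ 2 ≤ 2 * p * c - (1 + p ^ 2) := by nlinarith [(abs_le.mp hcle).1]
  set r : ℝ := 2 * p * c - (1 + p ^ 2) with hr
  have h2 : z ^ 2 = 2 * (c : ℂ) * z - 1 := by linear_combination z * hadd - hconj
  have hrCeq : ((r : ℝ) : ℂ) = 2 * (p : ℂ) * c - (1 + (p : ℂ) ^ 2) := by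
    rw [hr]; push_cast; ring
  have hkey : w * (z * (r : ℂ)) = (p : ℂ) * z := by
    linear_combination hq - w * (p : ℂ) * h2 + w * z * hrCeq
  have hrC : (r : ℂ) ≠ 0 := by exact_mod_cast hrneg.ne
  have hw : w = ((p / r : ℝ) : ℂ) := by
    have h3 : w * (r : ℂ) = (p : ℂ) := by
      have := mul_right_cancel₀ hz0 (by linear_combination hkey :
        (w * (r : ℂ)) * z = (p : ℂ) * z)
      exact this
    push_cast
    field_simp
    linear_combination h3
  refine ⟨p / r, ⟨?_, ?_⟩, hw.symm⟩
  · rw [le_div_iff_of_neg hrneg]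
    have hq0 : (0:ℝ) < p / (1 - p) ^ 2 := div_pos hp0 (by nlinarith)
    have hA : p / (1 - p) ^ 2 * (1 - p) ^ 2 = p := div_mul_cancel₀ p (by nlinarith)
    nlinarith [mul_le_mul_of_nonneg_left hrub hq0.le]
  · rw [div_le_iff_of_neg hrneg]
    have hq0 : (0:ℝ) < p / (1 + p) ^ 2 := div_pos hp0 (by nlinarith)
    have hB : p / (1 + p) ^ 2 * (1 + p) ^ 2 = p := div_mul_cancel₀ p (by nlinarith)
    nlinarith [mul_le_mul_of_nonneg_left hrlb hq0.le]

/-- If `t` is in the omitted segment and `z` satisfies the associated quadratic,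
then `z` is on the unit circle. -/
private lemma kp_seg_root (p t : ℝ) (hp0 : 0 < p) (hp1 : p < 1)
    (ht : t ∈ Icc (-(p / (1 - p) ^ 2)) (-(p / (1 + p) ^ 2))) (z : ℂ)
    (hq : (t : ℂ) * p * z ^ 2 - ((t : ℂ) * (1 + (p : ℂ) ^ 2) + p) * z + (t : ℂ) * p = 0) :
    ‖z‖ = 1 := by
  have hb0 : (0:ℝ) < p / (1 + p) ^ 2 := div_pos hp0 (by nlinarith)
  have ht0 : t < 0 := lt_of_le_of_lt ht.2 (by linarith)
  have hA : p / (1 - p) ^ 2 * (1 - p) ^ 2 = p := div_mul_cancel₀ p (by nlinarith)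
  have hB : p / (1 + p) ^ 2 * (1 + p) ^ 2 = p := div_mul_cancel₀ p (by nlinarith)
  have h1 : p / t ≤ -(1 - p) ^ 2 := by
    rw [div_le_iff_of_neg ht0]
    nlinarith [mul_le_mul_of_nonneg_right ht.1 (by nlinarith : (0:ℝ) ≤ (1 - p)^2)]
  have h2 : -(1 + p) ^ 2 ≤ p / t := by
    rw [le_div_iff_of_neg ht0]
    nlinarith [mul_le_mul_of_nonneg_right ht.2 (by nlinarith : (0:ℝ) ≤ (1 + p)^2)]
  set c : ℝ := (p / t + 1 + p ^ 2) / (2 * p) with hcdef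
  have hcub : c ≤ 1 := by
    rw [hcdef, div_le_one (by linarith)]; nlinarith
  have hclb : -1 ≤ c := by
    rw [hcdef, le_div_iff₀ (by linarith)]; nlinarith
  set s : ℝ := Real.sqrt (1 - c ^ 2) with hsdef
  have hs2 : s ^ 2 = 1 - c ^ 2 := Real.sq_sqrt (by nlinarith)
  have h2c : 2 * p * c * t = p + t * (1 + p ^ 2) := by
    rw [hcdef]; field_simp [ht0.ne]; ring
  have h2cC : 2 * (p : ℂ) * c * t = p + (t : ℂ) * (1 + (p : ℂ) ^ 2) := by
    exact_mod_cast h2c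
  have hs2C : (s : ℂ) ^ 2 = 1 - (c : ℂ) ^ 2 := by exact_mod_cast hs2
  have huv : ((c : ℂ) + s * I) * ((c : ℂ) - s * I) = 1 := by
    linear_combination (-(s : ℂ) ^ 2) * Complex.I_sq + hs2C
  have hfac : (t : ℂ) * p * (z - ((c : ℂ) + s * I)) * (z - ((c : ℂ) - s * I)) = 0 := by
    linear_combination hq - z * h2cC + (t : ℂ) * (p : ℂ) * huv
  have htp : (t : ℂ) * p ≠ 0 :=
    mul_ne_zero (by exact_mod_cast ht0.ne) (by exact_mod_cast hp0.ne')
  have habs : Real.sqrt (c ^ 2 + s ^ 2) = 1 := by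
    rw [show c ^ 2 + s ^ 2 = 1 by nlinarith]; exact Real.sqrt_one
  rcases mul_eq_zero.mp hfac with h | h
  · rcases mul_eq_zero.mp h with h' | h'
    · exact absurd h' htp
    · have hzeq : z = (c : ℂ) + (s : ℂ) * I := sub_eq_zero.mp h'
      rw [hzeq, Complex.norm_add_mul_I]
      exact habs
  · have hzeq : z = ((-s : ℝ) : ℂ) * I + (c : ℂ) := by
      rw [sub_eq_zero.mp h]; push_cast; ring
    rw [hzeq, add_comm, Complex.norm_add_mul_I]
    rw [show c ^ 2 + (-s) ^ 2 = c ^ 2 + s ^ 2 by ring]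
    exact habs

/-- The image of the unit disk (minus the pole `p`) under
`k_p(z) = pz/((p-z)(1-pz))` is the complement of the real segment
`[-p/(1-p)², -p/(1+p)²]`, and the distance from `k_p(0) = 0` to the boundary of
the image is `p/(1+p)²`. -/
theorem kp_image_and_dist (p : ℝ) (hp : p ∈ Ioo (0 : ℝ) 1) :
    (fun z : ℂ => (p : ℂ) * z / (((p : ℂ) - z) * (1 - (p : ℂ) * z))) ''
        (ball (0 : ℂ) 1 \ {(p : ℂ)})
      = ((fun t : ℝ => (t : ℂ)) '' Icc (-(p / (1 - p) ^ 2)) (-(p / (1 + p) ^ 2)))ᶜ ∧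
    infDist (0 : ℂ)
      (frontier ((fun z : ℂ => (p : ℂ) * z / (((p : ℂ) - z) * (1 - (p : ℂ) * z))) ''
        (ball (0 : ℂ) 1 \ {(p : ℂ)}))) = p / (1 + p) ^ 2 := by
  obtain ⟨hp0, hp1⟩ := hp
  have hpC : (p : ℂ) ≠ 0 := by exact_mod_cast hp0.ne'
  have hb0 : (0:ℝ) < p / (1 + p) ^ 2 := div_pos hp0 (by nlinarith)
  have ha0 : (0:ℝ) < p / (1 - p) ^ 2 := div_pos hp0 (by nlinarith)
  have hba : p / (1 + p) ^ 2 ≤ p / (1 - p) ^ 2 := by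
    rw [div_le_div_iff₀ (by nlinarith) (by nlinarith)]; nlinarith
  have himg : (fun z : ℂ => (p : ℂ) * z / (((p : ℂ) - z) * (1 - (p : ℂ) * z))) ''
        (ball (0 : ℂ) 1 \ {(p : ℂ)})
      = ((fun t : ℝ => (t : ℂ)) '' Icc (-(p / (1 - p) ^ 2)) (-(p / (1 + p) ^ 2)))ᶜ := by
    ext w
    simp only [mem_image, mem_compl_iff, mem_diff, mem_singleton_iff]
    constructor
    · rintro ⟨z, ⟨hz1, hzp⟩, rfl⟩
      rw [mem_ball_zero_iff] at hz1
      rintro ⟨t, ht, htw⟩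
      -- denominators are nonzero
      have hd1 : (p : ℂ) - z ≠ 0 := sub_ne_zero.mpr (Ne.symm hzp)
      have hd2 : 1 - (p : ℂ) * z ≠ 0 := by
        intro h
        have h1 : (p : ℂ) * z = 1 := (sub_eq_zero.mp h).symm
        have h2 : ‖(p : ℂ) * z‖ = p * ‖z‖ := by
          rw [norm_mul, Complex.norm_real, Real.norm_eq_abs, abs_of_pos hp0]
        rw [h1] at h2
        simp at h2
        nlinarith [norm_nonneg z]
      have heq : (p : ℂ) * z = (t : ℂ) * (((p : ℂ) - z) * (1 - (p : ℂ) * z)) :=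
        (div_eq_iff (mul_ne_zero hd1 hd2)).mp htw.symm
      have hq : (t : ℂ) * p * z ^ 2 - ((t : ℂ) * (1 + (p : ℂ) ^ 2) + p) * z
          + (t : ℂ) * p = 0 := by
        linear_combination -heq
      have := kp_seg_root p t hp0 hp1 ht z hq
      exact absurd this (by linarith)
    · intro hw
      by_cases hw0 : w = 0
      · refine ⟨0, ⟨by simp, Ne.symm hpC⟩, by simp [hw0]⟩
      · -- solve the quadratic
        obtain ⟨s, hs⟩ := IsAlgClosed.exists_pow_nat_eq
          ((w * (1 + (p : ℂ) ^ 2) + p) ^ 2 - 4 * (w * p) * (w * p)) (n := 2) two_pos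
        have hA : w * (p : ℂ) ≠ 0 := mul_ne_zero hw0 hpC
        set z₁ : ℂ := (w * (1 + (p : ℂ) ^ 2) + p + s) / (2 * (w * p)) with hz₁def
        have hz₁ : 2 * (w * (p : ℂ)) * z₁ = w * (1 + (p : ℂ) ^ 2) + p + s := by
          rw [hz₁def]; field_simp
        have hroot4 : 4 * (w * (p : ℂ)) * (w * (p : ℂ) * z₁ ^ 2
            - (w * (1 + (p : ℂ) ^ 2) + p) * z₁ + w * (p : ℂ)) = 0 := by
          linear_combination (2 * (w * (p : ℂ)) * z₁ + s - (w * (1 + (p : ℂ) ^ 2) + p)) * hz₁ + hs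
        have hroot : w * (p : ℂ) * z₁ ^ 2 - (w * (1 + (p : ℂ) ^ 2) + p) * z₁
            + w * (p : ℂ) = 0 := by
          rcases mul_eq_zero.mp hroot4 with h | h
          · exact absurd h (by simpa using hA)
          · exact h
        have hz₁0 : z₁ ≠ 0 := by
          intro h
          rw [h] at hroot
          have h0 : w * (p : ℂ) = 0 := by linear_combination hroot
          exact hA h0
        -- a root with absolute value < 1 gives a preimage
        have hgood : ∀ z : ℂ, w * (p : ℂ) * z ^ 2 - (w * (1 + (p : ℂ) ^ 2) + p) * z
            + w * (p : ℂ) = 0 → ‖z‖ < 1 →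
            ∃ x, ((x ∈ ball (0:ℂ) 1 ∧ x ≠ (p : ℂ))) ∧
              (p : ℂ) * x / (((p : ℂ) - x) * (1 - (p : ℂ) * x)) = w := by
          intro z hq hzlt
          have hzp : z ≠ (p : ℂ) := by
            intro h
            rw [h] at hq
            have h2' : ((p : ℝ) : ℂ) ^ 2 = 0 := by linear_combination -hq
            have hp2 : p ^ 2 = 0 := by exact_mod_cast h2'
            nlinarith
          have hd1 : (p : ℂ) - z ≠ 0 := sub_ne_zero.mpr (Ne.symm hzp)
          have hd2 : 1 - (p : ℂ) * z ≠ 0 := by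
            intro h
            have h1 : (p : ℂ) * z = 1 := (sub_eq_zero.mp h).symm
            have h2 : ‖(p : ℂ) * z‖ = p * ‖z‖ := by
              rw [norm_mul, Complex.norm_real, Real.norm_eq_abs, abs_of_pos hp0]
            rw [h1] at h2
            simp at h2
            nlinarith [norm_nonneg z]
          refine ⟨z, ⟨by rwa [mem_ball_zero_iff], hzp⟩, ?_⟩
          rw [div_eq_iff (mul_ne_zero hd1 hd2)]
          linear_combination -hq
        rcases lt_trichotomy (‖z₁‖) 1 with h | h | h
        · exact hgood z₁ hroot h
        · exact absurd (kp_circle p hp0 hp1 w z₁ h hroot)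
            (by simpa only [not_exists, not_and] using
              fun t ht htw => hw ⟨t, ht, htw⟩)
        · have hroot2 : w * (p : ℂ) * (z₁⁻¹) ^ 2 - (w * (1 + (p : ℂ) ^ 2) + p) * z₁⁻¹
              + w * (p : ℂ) = 0 := by
            have hinv : z₁ * z₁⁻¹ = 1 := mul_inv_cancel₀ hz₁0
            linear_combination (z₁⁻¹) ^ 2 * hroot +
              ((w * (1 + (p : ℂ) ^ 2) + p) * z₁⁻¹ - w * (p : ℂ) * (z₁ * z₁⁻¹ + 1)) * hinv
          have habs : ‖z₁⁻¹‖ < 1 := by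
            rw [norm_inv]
            exact inv_lt_one_of_one_lt₀ h
          exact hgood z₁⁻¹ hroot2 habs
  refine ⟨himg, ?_⟩
  rw [himg]
  set S := (fun t : ℝ => (t : ℂ)) '' Icc (-(p / (1 - p) ^ 2)) (-(p / (1 + p) ^ 2)) with hSdef
  have hSclosed : IsClosed S := (isCompact_Icc.image Complex.continuous_ofReal).isClosed
  have hSim : ∀ z ∈ S, z.im = 0 := by
    rintro z ⟨t, _, rfl⟩
    exact Complex.ofReal_im t
  have hSint : interior S = ∅ := by
    rw [eq_empty_iff_forall_notMem]
    intro z hz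
    obtain ⟨ε, hε, hball⟩ := Metric.isOpen_iff.mp isOpen_interior z hz
    have h1 : z ∈ S := interior_subset hz
    have h2 : z + (ε / 2) * Complex.I ∈ S := by
      apply interior_subset
      apply hball
      rw [mem_ball]
      rw [dist_eq_norm]
      have : z + (ε / 2) * Complex.I - z = (ε / 2 : ℝ) * Complex.I := by push_cast; ring
      rw [this, norm_mul, Complex.norm_real, Complex.norm_I, mul_one]
      rw [Real.norm_eq_abs, abs_of_pos (by linarith)]
      linarith
    have e1 : z.im = 0 := hSim z h1
    have e2 : (z + (ε / 2) * Complex.I).im = 0 := hSim _ h2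
    have e3 : (z + (ε / 2) * Complex.I).im = z.im + ε / 2 := by simp
    rw [e3, e1] at e2
    linarith
  have hfront : frontier Sᶜ = S := by
    rw [frontier_compl, hSclosed.frontier_eq, hSint, diff_empty]
  rw [hfront]
  have hmem : ((-(p / (1 + p) ^ 2) : ℝ) : ℂ) ∈ S :=
    ⟨-(p / (1 + p) ^ 2), ⟨by linarith, le_refl _⟩, rfl⟩
  apply le_antisymm
  · calc infDist (0 : ℂ) S ≤ dist (0 : ℂ) ((-(p / (1 + p) ^ 2) : ℝ) : ℂ) :=
        infDist_le_dist_of_mem hmem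
    _ = p / (1 + p) ^ 2 := by
        rw [dist_eq_norm, zero_sub, norm_neg, Complex.norm_real, Real.norm_eq_abs]
        rw [abs_of_neg (by linarith)]
        ring
  · by_contra hlt
    push_neg at hlt
    obtain ⟨y, hy, hdy⟩ := (infDist_lt_iff ⟨_, hmem⟩).mp hlt
    obtain ⟨t, ht, rfl⟩ := hy
    rw [dist_eq_norm, zero_sub, norm_neg, Complex.norm_real, Real.norm_eq_abs] at hdy
    have : |t| = -t := abs_of_neg (by nlinarith [ht.2])
    rw [this] at hdy
    nlinarith [ht.2]
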